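/- For all integers m, n with 1 ≤ n ≤ m − 1: m^n = m (n+1)^{n−1} + (m − n − 1) · Σ_{k=1}^{n−1} binom(n−1, k−1) (k+1)^{k−1} m (m−k−1)^{n−k−1}. -/

import Mathlib

open MeasureTheory Filter
open scoped BigOperators

attribute [local instance] Classical.propDecidable

namespace Parking

variable {m : ℕ}

/-- Final parking spot of a car whose first try is place `s`, given the set `occ`
of currently occupied places (places are cyclic, i.e. elements of `ZMod m`). -/
noncomputable def spot (occ : Finset (ZMod m)) (s : ZMod m) : ZMod m :=
  if h : ∃ t : ℕ, s + (t : ZMod m) ∉ occ then s + ((Nat.find h : ℕ) : ZMod m) else s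

/-- Set of occupied places after the first `k` cars of the hash sequence `p` have parked. -/
noncomputable def occs (p : ℕ → ZMod m) : ℕ → Finset (ZMod m)
  | 0 => ∅
  | k + 1 => insert (spot (occs p k) (p k)) (occs p k)

/-- Number of consecutive occupied places starting at `x` (0 if `x` is empty). -/
noncomputable def runLen (occ : Finset (ZMod m)) (x : ZMod m) : ℕ :=
  if h : ∃ t : ℕ, x + (t : ZMod m) ∉ occ then Nat.find h else 0

/-- First place of the block of consecutive occupied places containing `x`. -/
noncomputable def blockStart (occ : Finset (ZMod m)) (x : ZMod m) : ZMod m :=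
  if h : ∃ t : ℕ, x - ((t : ZMod m) + 1) ∉ occ then x - ((Nat.find h : ℕ) : ZMod m) else x

/-- Starting places of the blocks of consecutive occupied places. -/
noncomputable def blockStarts (occ : Finset (ZMod m)) : Finset (ZMod m) :=
  occ.filter (fun x => x - 1 ∉ occ)

/-- The multiset of sizes of the blocks of consecutive occupied places. -/
noncomputable def blockSizes (occ : Finset (ZMod m)) : Multiset ℕ :=
  (blockStarts occ).val.map (runLen occ)

/-- `B n p k` : size of the `k`-th largest block (1-indexed, `0` if there are fewer
than `k` blocks) once the `n` first cars of the hash sequence `p` have parked. -/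
noncomputable def B (n : ℕ) (p : ℕ → ZMod m) (k : ℕ) : ℕ :=
  ((Multiset.sort (blockSizes (occs p n)) (· ≤ ·)).reverse).getD (k - 1) 0

/-- `R n p k` : size of the `k`-th block (1-indexed, `0` if there are fewer than `k`
blocks), blocks being sorted by increasing date of birth (increasing order of the first
arrival of a car of the block), once the `n` first cars of `p` have parked. -/
noncomputable def R (n : ℕ) (p : ℕ → ZMod m) (k : ℕ) : ℕ :=
  (((((List.range n).map
        (fun i => blockStart (occs p n) (spot (occs p i) (p i)))).reverse.dedup).reverse).map
      (runLen (occs p n))).getD (k - 1) 0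

/-- Number of places tried by car `i` beyond its first try. -/
noncomputable def offs (p : ℕ → ZMod m) (i : ℕ) : ℕ :=
  if h : ∃ t : ℕ, p i + (t : ZMod m) ∉ occs p i then Nat.find h else 0

/-- `H n p y` : number of cars among the `n` first cars of `p` that tried place `y`,
successfully or not. -/
noncomputable def H (n : ℕ) (p : ℕ → ZMod m) (y : ZMod m) : ℕ :=
  ((Finset.range n).filter (fun i => ∃ t : ℕ, t ≤ offs p i ∧ p i + (t : ZMod m) = y)).card

/-- `Y n p k` : number of cars whose first try is place `k` (periodic in `k`). -/
noncomputable def Y (n : ℕ) (p : ℕ → ZMod m) (k : ℤ) : ℕ :=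
  ((Finset.range n).filter (fun i => p i = (k : ZMod m))).card

/-- `A n p k = Y₁ + ⋯ + Y_k - k n / m`. -/
noncomputable def A (n : ℕ) (p : ℕ → ZMod m) (k : ℕ) : ℝ :=
  (∑ j ∈ Finset.range k, (Y n p (j + 1) : ℝ)) - (k : ℝ) * n / m

/-- `V n p` : the smallest `j ∈ {1, …, m}` at which `A` attains its minimum over `{1, …, m}`. -/
noncomputable def V (n : ℕ) (p : ℕ → ZMod m) : ℕ :=
  sInf {j | 1 ≤ j ∧ j ≤ m ∧ ∀ i, 1 ≤ i → i ≤ m → A n p j ≤ A n p i}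

/-- `C n p k = Y₁ + ⋯ + Y_k - k` for `0 ≤ k ≤ m`, extended to `ℤ` by `C (k + m) = C k - ℓ`. -/
noncomputable def C (n : ℕ) (p : ℕ → ZMod m) (k : ℤ) : ℤ :=
  ((∑ j ∈ Finset.range (k.emod m).toNat, (Y n p (j + 1) : ℤ)) - ((k.emod m).toNat : ℤ))
    - k.ediv m * ((m : ℤ) - (n : ℤ))

/-- Extension of a hash sequence `Fin n → Fin m` to a map `ℕ → ZMod m`. -/
def ext (m n : ℕ) (p : Fin n → Fin m) : ℕ → ZMod m :=
  fun i => if h : i < n then (((p ⟨i, h⟩) : ℕ) : ZMod m) else 0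

/-- Probability of an event under the uniform distribution on the `m ^ n` hash sequences. -/
noncomputable def parkProb (m n : ℕ) (ev : (ℕ → ZMod m) → Prop) : ℝ :=
  ((Finset.univ.filter (fun p : Fin n → Fin m => ev (ext m n p))).card : ℝ) / (m : ℝ) ^ n

/-- Expectation of a random variable under the uniform distribution on hash sequences. -/
noncomputable def parkExp (m n : ℕ) (X : (ℕ → ZMod m) → ℝ) : ℝ :=
  (∑ p : Fin n → Fin m, X (ext m n p)) / (m : ℝ) ^ n

/-- `φ(M,N,K) = binom(N−1,K−1) (K+1)^{K−1} M (M−K−1)^{N−K−1} (M−N−1) / M^N`. -/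
noncomputable def phi (M N K : ℕ) : ℝ :=
  (Nat.choose (N - 1) (K - 1) : ℝ) * ((K : ℝ) + 1) ^ (K - 1) * (M : ℝ)
      * ((M - K - 1 : ℕ) : ℝ) ^ (N - K - 1) * ((M - N - 1 : ℕ) : ℝ) / (M : ℝ) ^ N

/-- The density `f(λ,x) = (λ/√(2π)) x^{−1/2} (1−x)^{−3/2} exp(−λ²x/(2(1−x)))` on `(0,1)`. -/
noncomputable def fdens (l x : ℝ) : ℝ :=
  if 0 < x ∧ x < 1 then
    l / Real.sqrt (2 * Real.pi) * x ^ (-(1 : ℝ) / 2) * (1 - x) ^ (-(3 : ℝ) / 2)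
      * Real.exp (-(l ^ 2 * x) / (2 * (1 - x)))
  else 0


open Finset

private lemma neg_one_pow_sub' {N k : ℕ} (h : k ≤ N) :
    ((-1 : ℤ)) ^ (N - k) = (-1) ^ N * (-1) ^ k := by
  have h1 : ((-1 : ℤ)) ^ (N - k) * (-1) ^ k = (-1) ^ N := by
    rw [← pow_add]; congr 1; omega
  have h2 : ((-1 : ℤ)) ^ k * (-1) ^ k = 1 := by
    rw [← pow_add, ← two_mul, pow_mul]; norm_num
  calc ((-1 : ℤ)) ^ (N - k) = (-1) ^ (N - k) * ((-1) ^ k * (-1) ^ k) := by rw [h2, mul_one]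
    _ = ((-1) ^ (N - k) * (-1) ^ k) * (-1) ^ k := by ring
    _ = (-1) ^ N * (-1) ^ k := by rw [h1]

private lemma alt_pascal (M : ℕ) (f : ℕ → ℤ) :
    ∑ k ∈ range (M + 1 + 1), (-1 : ℤ) ^ k * ((M + 1).choose k : ℤ) * f k
      = ∑ k ∈ range (M + 1), (-1 : ℤ) ^ k * (M.choose k : ℤ) * (f k - f (k + 1)) := by
  rw [Finset.sum_range_succ' (fun k => (-1 : ℤ) ^ k * ((M + 1).choose k : ℤ) * f k) (M + 1)]
  have e1 : ∀ k ∈ range (M + 1),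
      (-1 : ℤ) ^ (k + 1) * ((M + 1).choose (k + 1) : ℤ) * f (k + 1)
        = (-1 : ℤ) ^ (k + 1) * (M.choose (k + 1) : ℤ) * f (k + 1)
          - (-1 : ℤ) ^ k * (M.choose k : ℤ) * f (k + 1) := by
    intro k _
    have hp : (((M + 1).choose (k + 1)) : ℤ) = (M.choose k : ℤ) + (M.choose (k + 1) : ℤ) := by
      exact_mod_cast Nat.choose_succ_succ M k
    rw [hp]; ring
  have e5 : ∀ k ∈ range (M + 1),
      (-1 : ℤ) ^ k * (M.choose k : ℤ) * (f k - f (k + 1))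
        = (-1 : ℤ) ^ k * (M.choose k : ℤ) * f k
          - (-1 : ℤ) ^ k * (M.choose k : ℤ) * f (k + 1) := by
    intro k _; ring
  rw [Finset.sum_congr rfl e1, Finset.sum_sub_distrib,
    Finset.sum_congr rfl e5, Finset.sum_sub_distrib]
  have e2 := Finset.sum_range_succ' (fun k => (-1 : ℤ) ^ k * (M.choose k : ℤ) * f k) (M + 1)
  have e3 := Finset.sum_range_succ (fun k => (-1 : ℤ) ^ k * (M.choose k : ℤ) * f k) (M + 1)
  have e4 : (-1 : ℤ) ^ (M + 1) * (M.choose (M + 1) : ℤ) * f (M + 1) = 0 := by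
    rw [Nat.choose_succ_self]; push_cast; ring
  rw [e3] at e2
  simp only [pow_zero, Nat.choose_zero_right, Nat.cast_one, one_mul, Nat.cast_ofNat] at e2 e4 ⊢
  linarith [e2, e4]

private lemma fd : ∀ N d : ℕ, d < N → ∀ x : ℤ,
    ∑ k ∈ range (N + 1), (-1 : ℤ) ^ k * (N.choose k : ℤ) * (x + (k : ℤ)) ^ d = 0 := by
  intro N
  induction N with
  | zero => intro d h x; exact absurd h (Nat.not_lt_zero d)
  | succ M ih =>
    intro d hd x
    rw [alt_pascal M (fun k => (x + (k : ℤ)) ^ d)]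
    have diff : ∀ k ∈ range (M + 1),
        (-1 : ℤ) ^ k * (M.choose k : ℤ) * ((x + (k : ℤ)) ^ d - (x + ((k + 1 : ℕ) : ℤ)) ^ d)
          = ∑ i ∈ range d,
              -((d.choose i : ℤ) * ((-1 : ℤ) ^ k * (M.choose k : ℤ) * (x + (k : ℤ)) ^ i)) := by
      intro k _
      have hb : (x + ((k + 1 : ℕ) : ℤ)) = (x + (k : ℤ)) + 1 := by push_cast; ring
      have hstep : (x + ((k + 1 : ℕ) : ℤ)) ^ d
          = (∑ i ∈ range d, (x + (k : ℤ)) ^ i * (d.choose i : ℤ)) + (x + (k : ℤ)) ^ d := by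
        rw [hb, add_pow]
        simp only [one_pow, mul_one]
        rw [Finset.sum_range_succ, Nat.choose_self, Nat.cast_one, mul_one]
      rw [hstep]
      have h0 : (x + (k : ℤ)) ^ d
          - ((∑ i ∈ range d, (x + (k : ℤ)) ^ i * (d.choose i : ℤ)) + (x + (k : ℤ)) ^ d)
          = -∑ i ∈ range d, (x + (k : ℤ)) ^ i * (d.choose i : ℤ) := by ring
      rw [h0, mul_neg, Finset.mul_sum, ← Finset.sum_neg_distrib]
      exact Finset.sum_congr rfl fun i _ => by ring
    rw [Finset.sum_congr rfl diff, Finset.sum_comm]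
    apply Finset.sum_eq_zero
    intro i hi
    have hid : i < d := mem_range.mp hi
    have hz := ih i (by omega) x
    calc ∑ k ∈ range (M + 1),
        -((d.choose i : ℤ) * ((-1 : ℤ) ^ k * (M.choose k : ℤ) * (x + (k : ℤ)) ^ i))
        = -((d.choose i : ℤ)
            * ∑ k ∈ range (M + 1), (-1 : ℤ) ^ k * (M.choose k : ℤ) * (x + (k : ℤ)) ^ i) := by
          rw [Finset.sum_neg_distrib, ← Finset.mul_sum]
      _ = 0 := by rw [hz, mul_zero, neg_zero]

private lemma choose_swap {n : ℕ} (k i : ℕ) (hk : k ≤ n) (hi : i ≤ n) :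
    (n.choose k : ℤ) * ((n - k).choose i : ℤ) = (n.choose i : ℤ) * ((n - i).choose k : ℤ) := by
  rcases le_or_gt (k + i) n with h | h
  · have h1 := Nat.choose_mul (n := n) (Nat.le_add_right k i)
    have h2 := Nat.choose_mul (n := n) (Nat.le_add_left i k)
    rw [Nat.add_sub_cancel_left] at h1
    rw [Nat.add_sub_cancel] at h2
    have h3 : (k + i).choose k = (k + i).choose i := Nat.choose_symm_add
    have : n.choose k * (n - k).choose i = n.choose i * (n - i).choose k := by
      rw [← h1, h3, h2]
    exact_mod_cast this
  · have e1 : (n - k).choose i = 0 := Nat.choose_eq_zero_of_lt (by omega)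
    have e2 : (n - i).choose k = 0 := Nat.choose_eq_zero_of_lt (by omega)
    rw [e1, e2]; push_cast; ring

private lemma abel_sum (n : ℕ) (x y : ℤ) :
    ∑ k ∈ range (n + 1),
        (n.choose k : ℤ) * (if k = 0 then 1 else x * (x + (k : ℤ)) ^ (k - 1))
          * (y + ((n - k : ℕ) : ℤ)) ^ (n - k)
      = (x + y + (n : ℤ)) ^ n := by
  set s : ℤ := x + y + (n : ℤ) with hs
  have step1 : ∀ k ∈ range (n + 1),
      (n.choose k : ℤ) * (if k = 0 then 1 else x * (x + (k : ℤ)) ^ (k - 1))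
          * (y + ((n - k : ℕ) : ℤ)) ^ (n - k)
        = ∑ i ∈ range (n + 1), (n.choose i : ℤ) * s ^ i *
            (((n - i).choose k : ℤ) * (if k = 0 then 1 else x * (x + (k : ℤ)) ^ (k - 1))
              * (-(x + (k : ℤ))) ^ (n - i - k)) := by
    intro k hk
    have hkn : k ≤ n := Nat.lt_succ_iff.mp (mem_range.mp hk)
    have hy : (y + ((n - k : ℕ) : ℤ)) = s + (-(x + (k : ℤ))) := by
      rw [Nat.cast_sub hkn, hs]; push_cast; ring
    rw [hy, add_pow s (-(x + (k : ℤ))) (n - k), Finset.mul_sum]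
    rw [Finset.sum_subset (Finset.range_subset_range.mpr (show n - k + 1 ≤ n + 1 by omega))
      (by
        intro i hi1 hi2
        have hc : (n - k).choose i = 0 := by
          refine Nat.choose_eq_zero_of_lt ?_
          have h1 : i < n + 1 := mem_range.mp hi1
          have h2 : ¬ i < n - k + 1 := fun h => hi2 (mem_range.mpr h)
          omega
        simp [hc])]
    refine Finset.sum_congr rfl fun i hi => ?_
    have hin : i ≤ n := Nat.lt_succ_iff.mp (mem_range.mp hi)
    have hsw := choose_swap (n := n) k i hkn hin
    have hexp : n - k - i = n - i - k := by omega
    rw [hexp]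
    linear_combination (s ^ i * (-(x + (k : ℤ))) ^ (n - i - k)
      * (if k = 0 then 1 else x * (x + (k : ℤ)) ^ (k - 1))) * hsw
  rw [Finset.sum_congr rfl step1, Finset.sum_comm]
  have inner : ∀ i ∈ range (n + 1),
      ∑ k ∈ range (n + 1), (n.choose i : ℤ) * s ^ i *
          (((n - i).choose k : ℤ) * (if k = 0 then 1 else x * (x + (k : ℤ)) ^ (k - 1))
            * (-(x + (k : ℤ))) ^ (n - i - k))
        = if i = n then s ^ n else 0 := by
    intro i hi
    have hin : i ≤ n := Nat.lt_succ_iff.mp (mem_range.mp hi)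
    rw [← Finset.mul_sum]
    rw [← Finset.sum_subset (Finset.range_subset_range.mpr (show n - i + 1 ≤ n + 1 by omega))
      (by
        intro k hk1 hk2
        have hc : (n - i).choose k = 0 := by
          refine Nat.choose_eq_zero_of_lt ?_
          have h1 : k < n + 1 := mem_range.mp hk1
          have h2 : ¬ k < n - i + 1 := fun h => hk2 (mem_range.mpr h)
          omega
        simp [hc])]
    by_cases hieq : i = n
    · subst hieq
      simp
    · have hterm : ∀ k ∈ range (n - i + 1),
          (((n - i).choose k : ℤ) * (if k = 0 then 1 else x * (x + (k : ℤ)) ^ (k - 1))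
              * (-(x + (k : ℤ))) ^ (n - i - k))
            = ((-1 : ℤ) ^ (n - i) * x)
              * ((-1 : ℤ) ^ k * ((n - i).choose k : ℤ) * (x + (k : ℤ)) ^ (n - i - 1)) := by
        intro k hk
        have hkN : k ≤ n - i := Nat.lt_succ_iff.mp (mem_range.mp hk)
        rw [neg_pow, neg_one_pow_sub' hkN]
        by_cases hk0 : k = 0
        · subst hk0
          rw [if_pos rfl, Nat.choose_zero_right]
          obtain ⟨E, hE⟩ : ∃ E, n - i = E + 1 := ⟨n - i - 1, by omega⟩
          rw [hE]
          simp only [Nat.add_sub_cancel, Nat.sub_zero, Nat.cast_zero, add_zero, Nat.cast_one]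
          ring
        · rw [if_neg hk0]
          have hpow : (x + (k : ℤ)) ^ (k - 1) * (x + (k : ℤ)) ^ (n - i - k)
              = (x + (k : ℤ)) ^ (n - i - 1) := by
            rw [← pow_add]; congr 1; omega
          linear_combination (((n - i).choose k : ℤ) * x * (-1 : ℤ) ^ (n - i) * (-1 : ℤ) ^ k) * hpow
      rw [Finset.sum_congr rfl hterm, ← Finset.mul_sum,
        fd (n - i) (n - i - 1) (by omega) x, mul_zero, mul_zero, if_neg hieq]
  rw [Finset.sum_congr rfl inner]
  rw [Finset.sum_ite_eq' (range (n + 1)) n (fun _ => s ^ n)]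
  rw [if_pos (self_mem_range_succ n)]


/-- Decomposition of the `m^n` parking functions according to the size of the block
containing a given car:
`m^n = m (n+1)^{n−1} + (m−n−1) Σ_{k=1}^{n−1} binom(n−1,k−1)(k+1)^{k−1} m (m−k−1)^{n−k−1}`. -/
theorem parking_function_decomposition_identity
    (m n : ℕ) (h1 : 1 ≤ n) (h2 : n + 1 ≤ m) :
    m ^ n = m * (n + 1) ^ (n - 1)
      + (m - n - 1) * ∑ k ∈ Finset.Icc 1 (n - 1),
          Nat.choose (n - 1) (k - 1) * (k + 1) ^ (k - 1) * m * (m - k - 1) ^ (n - k - 1) := by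
  obtain ⟨N, rfl⟩ : ∃ N, n = N + 1 := ⟨n - 1, by omega⟩
  have hm : N + 2 ≤ m := by omega
  set w : ℤ := (m : ℤ) - (N : ℤ) - 2 with hw
  have habel := abel_sum N w 2
  rw [← Finset.sum_range_reflect] at habel
  simp only [Nat.add_sub_cancel] at habel
  rw [Finset.sum_range_succ] at habel
  simp only [Nat.sub_self, Nat.sub_zero, Nat.choose_zero_right, Nat.cast_one, one_mul,
    if_pos rfl] at habel
  set U : ℤ := ∑ j ∈ range N,
      (N.choose j : ℤ) * ((m : ℤ) - (j : ℤ) - 2) ^ (N - 1 - j) * (2 + (j : ℤ)) ^ j with hU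
  have hsum : ∑ j ∈ range N,
      (N.choose (N - j) : ℤ) * (if N - j = 0 then 1 else w * (w + ((N - j : ℕ) : ℤ)) ^ (N - j - 1))
        * ((2 : ℤ) + ((N - (N - j) : ℕ) : ℤ)) ^ (N - (N - j)) = w * U := by
    rw [hU, Finset.mul_sum]
    refine Finset.sum_congr rfl fun j hj => ?_
    have hjN : j < N := mem_range.mp hj
    have e1 : N - (N - j) = j := by omega
    have e2 : N - j ≠ 0 := by omega
    have e3 : N - j - 1 = N - 1 - j := by omega
    rw [e1, if_neg e2, Nat.choose_symm hjN.le, e3, Nat.cast_sub hjN.le]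
    push_cast
    ring
  rw [if_pos trivial, one_mul] at habel
  rw [hsum] at habel
  have hw2 : w + 2 + (N : ℤ) = (m : ℤ) := by rw [hw]; ring
  rw [hw2] at habel
  simp only [Nat.add_sub_cancel]
  have hIcc : ∑ k ∈ Icc 1 N,
      ((N.choose (k - 1) : ℤ) * ((k : ℤ) + 1) ^ (k - 1) * (m : ℤ)
        * ((m - k - 1 : ℕ) : ℤ) ^ (N + 1 - k - 1))
      = (m : ℤ) * U := by
    rw [← Finset.Ico_add_one_right_eq_Icc, Finset.sum_Ico_eq_sum_range]
    simp only [Nat.add_sub_cancel]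
    rw [hU, Finset.mul_sum]
    refine Finset.sum_congr rfl fun j hj => ?_
    have hjN : j < N := mem_range.mp hj
    have e1 : 1 + j - 1 = j := by omega
    have e2 : N + 1 - (1 + j) - 1 = N - 1 - j := by omega
    have e3 : m - (1 + j) - 1 = m - (j + 2) := by omega
    rw [e1, e2, e3, Nat.cast_sub (by omega : j + 2 ≤ m)]
    push_cast
    ring
  have key : ((m : ℤ)) ^ (N + 1)
      = (m : ℤ) * ((N : ℤ) + 1 + 1) ^ N + ((m - (N + 1) - 1 : ℕ) : ℤ) *
          ∑ k ∈ Icc 1 N, ((N.choose (k - 1) : ℤ) * ((k : ℤ) + 1) ^ (k - 1) * (m : ℤ)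
            * ((m - k - 1 : ℕ) : ℤ) ^ (N + 1 - k - 1)) := by
    rw [hIcc]
    have e4 : ((m - (N + 1) - 1 : ℕ) : ℤ) = w := by
      rw [show m - (N + 1) - 1 = m - (N + 2) by omega, Nat.cast_sub hm, hw]
      push_cast
      ring
    rw [e4]
    linear_combination (-(m : ℤ)) * habel
  exact_mod_cast key

end Parking
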